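/- Let b ≥ 2 and n ≥ 1 be integers, let R_n be a generalized Hammersley point set with discrepancy function D, and let j₁, j₂ ∈ ℕ₀ with j₁ ≥ n or j₂ ≥ n, m₁ ∈ {0,…,b^{j₁}−1}, m₂ ∈ {0,…,b^{j₂}−1}, ℓ₁, ℓ₂ ∈ {1,…,b−1}. Then |∫_{[0,1)²} D(x₁,x₂)·h_{j₁,m₁,ℓ₁}(x₁)·h_{j₂,m₂,ℓ₂}(x₂) dx₁dx₂| = b^{−2j₁−2j₂−2} / (|exp(2πiℓ₁/b) − 1|·|exp(2πiℓ₂/b) − 1|). -/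

import Mathlib

open scoped Classical
open Finset MeasureTheory

/-- `bexp b ℓ k = exp(2πiℓk/b)`. -/
noncomputable def bexp (b ℓ k : ℕ) : ℂ :=
  Complex.exp (2 * Real.pi * Complex.I * ℓ * k / b)

/-- The `b`-adic Haar function `h_{j,m,ℓ}` on `[0,1)`. -/
noncomputable def haar (b j m ℓ : ℕ) (x : ℝ) : ℂ :=
  ∑ k ∈ Finset.range b,
    if ((b:ℝ)^(j+1))⁻¹ * ((b:ℝ)*m + k) ≤ x ∧ x < ((b:ℝ)^(j+1))⁻¹ * ((b:ℝ)*m + k + 1)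
    then bexp b ℓ k else 0

/-- First coordinate of the generalized Hammersley point: `z₁ = tₙ/b + ⋯ + t₁/bⁿ`. -/
noncomputable def z1 (b n : ℕ) (t : Fin n → Fin b) : ℝ :=
  ∑ i : Fin n, ((t i : ℕ) : ℝ) / (b:ℝ) ^ (n - (i:ℕ))

/-- Second coordinate: `z₂ = s₁(t₁)/b + s₂(t₂)/b² + ⋯ + sₙ(tₙ)/bⁿ`. -/
noncomputable def z2 (b n : ℕ) (s : Fin n → ℕ → ℕ) (t : Fin n → Fin b) : ℝ :=
  ∑ i : Fin n, ((s i (t i : ℕ) : ℕ) : ℝ) / (b:ℝ) ^ ((i:ℕ) + 1)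

/-- Each `s i` is either the identity or the reflection `t ↦ b−1−t` on digits. -/
def IsDigitMaps (b n : ℕ) (s : Fin n → ℕ → ℕ) : Prop :=
  ∀ i, (∀ k, k < b → s i k = k) ∨ (∀ k, k < b → s i k = b - 1 - k)

/-- The discrepancy function of the generalized Hammersley point set. -/
noncomputable def disc (b n : ℕ) (s : Fin n → ℕ → ℕ) (x₁ x₂ : ℝ) : ℝ :=
  (b:ℝ) ^ (-(n:ℤ)) *
      ∑ t : Fin n → Fin b,
        (if z1 b n t < x₁ then (1:ℝ) else 0) * (if z2 b n s t < x₂ then (1:ℝ) else 0)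
    - x₁ * x₂

/-! ### Auxiliary lemmas on `bexp` -/

lemma bexp_eq_pow (b ℓ k : ℕ) : bexp b ℓ k = bexp b ℓ 1 ^ k := by
  unfold bexp
  rw [← Complex.exp_nat_mul]
  congr 1
  push_cast
  ring

lemma bexp_pow_b (b ℓ : ℕ) (hb : 0 < b) : bexp b ℓ 1 ^ b = 1 := by
  rw [bexp, ← Complex.exp_nat_mul]
  have hb' : (b:ℂ) ≠ 0 := by exact_mod_cast hb.ne'
  have h : (b:ℂ) * (2 * Real.pi * Complex.I * ℓ * 1 / b) = (ℓ:ℤ) * (2 * Real.pi * Complex.I) := by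
    field_simp; norm_cast
  push_cast
  rw [h, Complex.exp_int_mul_two_pi_mul_I]

lemma bexp_ne_one (b ℓ : ℕ) (hb : 2 ≤ b) (hℓ : 1 ≤ ℓ) (hℓ' : ℓ ≤ b - 1) :
    bexp b ℓ 1 ≠ 1 := by
  intro h
  rw [bexp, Complex.exp_eq_one_iff] at h
  obtain ⟨k, hk⟩ := h
  have h2pi : (2 * (Real.pi:ℂ) * Complex.I) ≠ 0 := by
    simp [Real.pi_ne_zero, Complex.I_ne_zero]
  have hb' : (b:ℂ) ≠ 0 := by
    exact_mod_cast (by omega : b ≠ 0)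
  have hc : (ℓ:ℂ) = (k:ℂ) * b := by
    have h1 : (2 * (Real.pi:ℂ) * Complex.I) * ℓ = (2 * (Real.pi:ℂ) * Complex.I) * ((k:ℂ) * b) := by
      field_simp at hk
      linear_combination (2 * (Real.pi:ℂ) * Complex.I) * hk
    exact mul_left_cancel₀ h2pi h1
  have hz : (ℓ:ℤ) = k * b := by exact_mod_cast hc
  have hbl : (b:ℤ) ∣ (ℓ:ℤ) := ⟨k, by linarith [hz]⟩
  have h1 : (b:ℤ) ≤ ℓ := Int.le_of_dvd (by exact_mod_cast hℓ) hbl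
  omega

lemma sum_bexp (b ℓ : ℕ) (hb : 2 ≤ b) (hℓ : 1 ≤ ℓ) (hℓ' : ℓ ≤ b - 1) :
    ∑ k ∈ range b, bexp b ℓ 1 ^ k = 0 := by
  rw [geom_sum_eq (bexp_ne_one b ℓ hb hℓ hℓ'), bexp_pow_b b ℓ (by omega), sub_self, zero_div]

lemma sum_mul_pow (ω : ℂ) (n : ℕ) :
    (ω - 1) * ∑ k ∈ range n, (k:ℂ) * ω ^ k
      = n * ω ^ n - ω ^ n - (∑ k ∈ range n, ω ^ k) + 1 := by
  induction n with
  | zero => simp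
  | succ n ih =>
    rw [Finset.sum_range_succ, Finset.sum_range_succ (f := fun k => ω ^ k)]
    push_cast
    linear_combination ih

lemma sum_k_bexp (b ℓ : ℕ) (hb : 2 ≤ b) (hℓ : 1 ≤ ℓ) (hℓ' : ℓ ≤ b - 1) :
    ∑ k ∈ range b, (k:ℂ) * bexp b ℓ 1 ^ k = b * (bexp b ℓ 1 - 1)⁻¹ := by
  have hne : bexp b ℓ 1 - 1 ≠ 0 := sub_ne_zero.mpr (bexp_ne_one b ℓ hb hℓ hℓ')
  have h := sum_mul_pow (bexp b ℓ 1) b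
  rw [bexp_pow_b b ℓ (by omega), sum_bexp b ℓ hb hℓ hℓ'] at h
  have h' : (bexp b ℓ 1 - 1) * ∑ k ∈ range b, (k:ℂ) * bexp b ℓ 1 ^ k = b := by
    rw [h]; ring
  field_simp
  linear_combination h'

/-! ### Integrals against Haar functions -/

lemma haar_rep (b j m ℓ : ℕ) (f : ℝ → ℂ) (x : ℝ) :
    f x * haar b j m ℓ x
      = ∑ k ∈ range b,
          (Set.Ico (((b:ℝ)^(j+1))⁻¹ * ((b:ℝ)*m + k)) (((b:ℝ)^(j+1))⁻¹ * ((b:ℝ)*m + k + 1))).indicator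
            (fun y => f y * bexp b ℓ k) x := by
  rw [haar, Finset.mul_sum]
  refine Finset.sum_congr rfl fun k _ => ?_
  by_cases h : ((b:ℝ)^(j+1))⁻¹ * ((b:ℝ)*m + k) ≤ x ∧ x < ((b:ℝ)^(j+1))⁻¹ * ((b:ℝ)*m + k + 1) <;>
    simp [h, Set.indicator_apply, Set.mem_Ico]

lemma Ico_subset_unit (b j m k : ℕ) (hb : 2 ≤ b) (hm : m < b ^ j) (hk : k < b) :
    Set.Ico (((b:ℝ)^(j+1))⁻¹ * ((b:ℝ)*m + k)) (((b:ℝ)^(j+1))⁻¹ * ((b:ℝ)*m + k + 1))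
      ⊆ Set.Ico (0:ℝ) 1 := by
  have hb0 : (0:ℝ) < b := by exact_mod_cast (by omega : 0 < b)
  have hδ : (0:ℝ) < ((b:ℝ)^(j+1))⁻¹ := by positivity
  apply Set.Ico_subset_Ico
  · positivity
  · have hN : (b*m + k + 1 : ℕ) ≤ b^(j+1) := by
      calc b*m + k + 1 ≤ b*m + b := by omega
        _ = b*(m+1) := by ring
        _ ≤ b*b^j := Nat.mul_le_mul_left b hm
        _ = b^(j+1) := by rw [pow_succ]; ring
    have hN' : ((b:ℝ)*m + k + 1) ≤ (b:ℝ)^(j+1) := by exact_mod_cast hN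
    calc ((b:ℝ)^(j+1))⁻¹ * ((b:ℝ)*m + k + 1)
        ≤ ((b:ℝ)^(j+1))⁻¹ * (b:ℝ)^(j+1) := by
          exact mul_le_mul_of_nonneg_left hN' hδ.le
      _ = 1 := inv_mul_cancel₀ (by positivity)

lemma integrableOn_mul_haar {b j m : ℕ} (ℓ : ℕ) (hb : 2 ≤ b) (hm : m < b ^ j)
    {f : ℝ → ℂ} (hf : IntegrableOn f (Set.Ico (0:ℝ) 1)) :
    IntegrableOn (fun x => f x * haar b j m ℓ x) (Set.Ico (0:ℝ) 1) := by
  have hrep : (fun x => f x * haar b j m ℓ x)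
      = fun x => ∑ k ∈ range b,
          (Set.Ico (((b:ℝ)^(j+1))⁻¹ * ((b:ℝ)*m + k)) (((b:ℝ)^(j+1))⁻¹ * ((b:ℝ)*m + k + 1))).indicator
            (fun y => f y * bexp b ℓ k) x := funext (haar_rep b j m ℓ f)
  rw [hrep]
  exact integrable_finset_sum _ fun k _ => (hf.mul_const _).indicator measurableSet_Ico

lemma integral_mul_haar {b j m : ℕ} (ℓ : ℕ) (hb : 2 ≤ b) (hm : m < b ^ j)
    {f : ℝ → ℂ} (hf : IntegrableOn f (Set.Ico (0:ℝ) 1)) :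
    ∫ x in Set.Ico (0:ℝ) 1, f x * haar b j m ℓ x
      = ∑ k ∈ range b, bexp b ℓ k *
          ∫ x in Set.Ico (((b:ℝ)^(j+1))⁻¹ * ((b:ℝ)*m + k)) (((b:ℝ)^(j+1))⁻¹ * ((b:ℝ)*m + k + 1)),
            f x := by
  simp only [haar_rep b j m ℓ f]
  rw [integral_finset_sum _ fun k _ => (hf.mul_const _).indicator measurableSet_Ico]
  refine Finset.sum_congr rfl fun k hk => ?_
  rw [setIntegral_indicator measurableSet_Ico,
    Set.inter_eq_self_of_subset_right (Ico_subset_unit b j m k hb hm (Finset.mem_range.mp hk)),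
    integral_mul_const, mul_comm]

lemma integrableOn_ofReal_Ico : IntegrableOn (fun x : ℝ => (x:ℂ)) (Set.Ico (0:ℝ) 1) :=
  (Complex.continuous_ofReal.integrableOn_Icc (a := (0:ℝ)) (b := 1)).mono_set
    Set.Ico_subset_Icc_self

lemma integral_x_mul_haar (b j m ℓ : ℕ) (hb : 2 ≤ b) (hm : m < b ^ j)
    (hℓ : 1 ≤ ℓ) (hℓ' : ℓ ≤ b - 1) :
    ∫ x in Set.Ico (0:ℝ) 1, (x:ℂ) * haar b j m ℓ x
      = ((b:ℂ) ^ (2*j+1))⁻¹ * (bexp b ℓ 1 - 1)⁻¹ := by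
  have hb0 : (0:ℝ) < b := by exact_mod_cast (by omega : 0 < b)
  have hbC : (b:ℂ) ≠ 0 := by exact_mod_cast (by omega : b ≠ 0)
  have hδ : (0:ℝ) < ((b:ℝ)^(j+1))⁻¹ := by positivity
  rw [integral_mul_haar ℓ hb hm integrableOn_ofReal_Ico]
  have hval : ∀ k : ℕ,
      (∫ x in Set.Ico (((b:ℝ)^(j+1))⁻¹ * ((b:ℝ)*m + k)) (((b:ℝ)^(j+1))⁻¹ * ((b:ℝ)*m + k + 1)),
        (x:ℂ))
      = ((((((b:ℝ)^(j+1))⁻¹ * ((b:ℝ)*m + k + 1))^2 - (((b:ℝ)^(j+1))⁻¹ * ((b:ℝ)*m + k))^2)/2 : ℝ) : ℂ) := by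
    intro k
    have hle : ((b:ℝ)^(j+1))⁻¹ * ((b:ℝ)*m + k) ≤ ((b:ℝ)^(j+1))⁻¹ * ((b:ℝ)*m + k + 1) := by
      apply mul_le_mul_of_nonneg_left (by linarith) hδ.le
    rw [show (∫ x in Set.Ico (((b:ℝ)^(j+1))⁻¹ * ((b:ℝ)*m + k)) (((b:ℝ)^(j+1))⁻¹ * ((b:ℝ)*m + k + 1)),
        (x:ℂ))
      = ((∫ x in Set.Ico (((b:ℝ)^(j+1))⁻¹ * ((b:ℝ)*m + k)) (((b:ℝ)^(j+1))⁻¹ * ((b:ℝ)*m + k + 1)),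
        x : ℝ):ℂ) from integral_ofReal (f := fun x => x)]
    congr 1
    rw [MeasureTheory.integral_Ico_eq_integral_Ioo, ← MeasureTheory.integral_Ioc_eq_integral_Ioo,
      ← intervalIntegral.integral_of_le hle, integral_id]
  simp only [hval]
  have hterm : ∀ k ∈ range b,
      bexp b ℓ k *
        (((((((b:ℝ)^(j+1))⁻¹ * ((b:ℝ)*m + k + 1))^2 - ((((b:ℝ)^(j+1))⁻¹ * ((b:ℝ)*m + k)))^2)/2 : ℝ)) : ℂ)
      = ((((b:ℂ)^(j+1))⁻¹^2 * ((b:ℂ)*m) + (((b:ℂ)^(j+1))⁻¹^2)/2) * bexp b ℓ 1 ^ k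
          + (((b:ℂ)^(j+1))⁻¹^2) * ((k:ℂ) * bexp b ℓ 1 ^ k)) := by
    intro k _
    rw [bexp_eq_pow]
    push_cast
    ring
  rw [Finset.sum_congr rfl hterm, Finset.sum_add_distrib, ← Finset.mul_sum, ← Finset.mul_sum,
    sum_bexp b ℓ hb hℓ hℓ', sum_k_bexp b ℓ hb hℓ hℓ', mul_zero, zero_add]
  have hx : ((b:ℂ) ^ (j+1))⁻¹ ^ 2 * (b:ℂ) = ((b:ℂ) ^ (2*j+1))⁻¹ := by
    rw [inv_pow, ← pow_mul, show (j+1)*2 = (2*j+1)+1 from by ring, pow_succ, mul_inv,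
      mul_assoc, inv_mul_cancel₀ hbC, mul_one]
  rw [← mul_assoc, hx]

lemma integral_indicator_mul_haar (b j m ℓ : ℕ) (hb : 2 ≤ b) (hm : m < b ^ j)
    (hℓ : 1 ≤ ℓ) (hℓ' : ℓ ≤ b - 1) (a : ℝ) (c : ℕ) (ha : a * (b:ℝ)^j = c) :
    ∫ x in Set.Ico (0:ℝ) 1, (if a < x then (1:ℂ) else 0) * haar b j m ℓ x = 0 := by
  have hb0 : (0:ℝ) < b := by exact_mod_cast (by omega : 0 < b)
  have hbj : (0:ℝ) < (b:ℝ)^j := by positivity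
  have hδ : (0:ℝ) < ((b:ℝ)^(j+1))⁻¹ := by positivity
  have ha' : a = (c:ℝ) * ((b:ℝ)^j)⁻¹ := by
    field_simp
    linarith [ha]
  have hint : IntegrableOn (fun x : ℝ => (if a < x then (1:ℂ) else 0)) (Set.Ico (0:ℝ) 1) := by
    have hrep : (fun x : ℝ => (if a < x then (1:ℂ) else 0))
        = (Set.Ioi a).indicator (fun _ => (1:ℂ)) := by
      funext x
      simp [Set.indicator_apply, Set.mem_Ioi]
    rw [hrep]
    exact (integrable_const _).indicator measurableSet_Ioi
  rw [integral_mul_haar ℓ hb hm hint]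
  -- the common δ⁻¹ relation: δ * b^(j+1) = 1, and a = c * b * δ
  have hδb : ((b:ℝ)^(j+1))⁻¹ * (b:ℝ)^(j+1) = 1 := inv_mul_cancel₀ (by positivity)
  have haδ : a = ((b:ℝ)^(j+1))⁻¹ * ((b:ℝ) * c) := by
    rw [ha']
    rw [pow_succ]
    field_simp
  by_cases hcm : c ≤ m
  · -- a is to the left of every subinterval: indicator ≡ 1 a.e. on each
    have hval : ∀ k ∈ range b,
        (∫ x in Set.Ico (((b:ℝ)^(j+1))⁻¹ * ((b:ℝ)*m + k)) (((b:ℝ)^(j+1))⁻¹ * ((b:ℝ)*m + k + 1)),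
          (if a < x then (1:ℂ) else 0))
        = (((b:ℝ)^(j+1))⁻¹ : ℝ) • (1:ℂ) := by
      intro k _
      have hal : a ≤ ((b:ℝ)^(j+1))⁻¹ * ((b:ℝ)*m + k) := by
        rw [haδ]
        apply mul_le_mul_of_nonneg_left _ hδ.le
        have : (b:ℝ) * c ≤ (b:ℝ) * m := by
          apply mul_le_mul_of_nonneg_left _ hb0.le
          exact_mod_cast hcm
        have hk0 : (0:ℝ) ≤ k := Nat.cast_nonneg k
        linarith
      rw [MeasureTheory.integral_Ico_eq_integral_Ioo]
      rw [setIntegral_congr_fun measurableSet_Ioo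
        (fun x hx => if_pos (lt_of_le_of_lt hal hx.1))]
      rw [setIntegral_const, Real.volume_real_Ioo_of_le (mul_le_mul_of_nonneg_left (by linarith) hδ.le)]
      congr 1
      ring
    rw [Finset.sum_congr rfl (fun k hk => by rw [hval k hk] :
      ∀ k ∈ range b, bexp b ℓ k *
        (∫ x in Set.Ico (((b:ℝ)^(j+1))⁻¹ * ((b:ℝ)*m + k)) (((b:ℝ)^(j+1))⁻¹ * ((b:ℝ)*m + k + 1)),
          (if a < x then (1:ℂ) else 0))
        = bexp b ℓ k * ((((b:ℝ)^(j+1))⁻¹ : ℝ) • (1:ℂ)))]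
    simp only [Complex.real_smul, mul_one]
    rw [← Finset.sum_mul]
    have : ∑ k ∈ range b, bexp b ℓ k = 0 := by
      calc ∑ k ∈ range b, bexp b ℓ k = ∑ k ∈ range b, bexp b ℓ 1 ^ k :=
            Finset.sum_congr rfl fun k _ => bexp_eq_pow b ℓ k
        _ = 0 := sum_bexp b ℓ hb hℓ hℓ'
    rw [this, zero_mul]
  · -- a is to the right of every subinterval: indicator ≡ 0 on each
    have hval : ∀ k ∈ range b,
        (∫ x in Set.Ico (((b:ℝ)^(j+1))⁻¹ * ((b:ℝ)*m + k)) (((b:ℝ)^(j+1))⁻¹ * ((b:ℝ)*m + k + 1)),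
          (if a < x then (1:ℂ) else 0)) = 0 := by
      intro k hk
      have hk' : k < b := Finset.mem_range.mp hk
      have har : ((b:ℝ)^(j+1))⁻¹ * ((b:ℝ)*m + k + 1) ≤ a := by
        rw [haδ]
        apply mul_le_mul_of_nonneg_left _ hδ.le
        have h1 : ((m:ℝ) + 1) ≤ c := by exact_mod_cast (by omega : m + 1 ≤ c)
        have h2 : ((k:ℝ) + 1) ≤ b := by exact_mod_cast (by omega : k + 1 ≤ b)
        nlinarith
      rw [setIntegral_congr_fun measurableSet_Ico
        (fun x hx => if_neg (not_lt.mpr (le_of_lt (lt_of_lt_of_le hx.2 har))))]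
      exact integral_zero _ _
    refine Finset.sum_eq_zero fun k hk => ?_
    rw [hval k hk, mul_zero]

/-! ### The Hammersley points have `b`-adic coordinates -/

lemma z1_scaled (b n : ℕ) (hb : 2 ≤ b) (t : Fin n → Fin b) (j : ℕ) (hj : n ≤ j) :
    ∃ c : ℕ, z1 b n t * (b:ℝ)^j = c := by
  have hb0 : (b:ℝ) ≠ 0 := by exact_mod_cast (by omega : b ≠ 0)
  refine ⟨(∑ i : Fin n, (t i : ℕ) * b^(i:ℕ)) * b^(j-n), ?_⟩
  have h1 : z1 b n t * (b:ℝ)^n = ∑ i : Fin n, ((t i : ℕ):ℝ) * (b:ℝ)^(i:ℕ) := by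
    rw [z1, Finset.sum_mul]
    refine Finset.sum_congr rfl fun i _ => ?_
    have hpow : (b:ℝ)^((n:ℕ) - (i:ℕ)) * (b:ℝ)^(i:ℕ) = (b:ℝ)^n := by
      rw [← pow_add]
      congr 1
      omega
    have hpne : (b:ℝ)^((n:ℕ) - (i:ℕ)) ≠ 0 := by positivity
    rw [div_mul_eq_mul_div, ← hpow, mul_comm ((b:ℝ)^((n:ℕ) - (i:ℕ))) ((b:ℝ)^(i:ℕ)), ← mul_assoc,
      mul_div_assoc, div_self hpne, mul_one]
  have h2 : (b:ℝ)^j = (b:ℝ)^n * (b:ℝ)^(j-n) := by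
    rw [← pow_add]
    congr 1
    omega
  rw [h2, ← mul_assoc, h1]
  push_cast
  rw [Finset.sum_mul]

lemma z2_scaled (b n : ℕ) (hb : 2 ≤ b) (s : Fin n → ℕ → ℕ) (t : Fin n → Fin b)
    (j : ℕ) (hj : n ≤ j) :
    ∃ c : ℕ, z2 b n s t * (b:ℝ)^j = c := by
  have hb0 : (b:ℝ) ≠ 0 := by exact_mod_cast (by omega : b ≠ 0)
  refine ⟨(∑ i : Fin n, s i (t i : ℕ) * b^(n - ((i:ℕ)+1))) * b^(j-n), ?_⟩
  have h1 : z2 b n s t * (b:ℝ)^n = ∑ i : Fin n, ((s i (t i : ℕ) : ℕ):ℝ) * (b:ℝ)^(n - ((i:ℕ)+1)) := by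
    rw [z2, Finset.sum_mul]
    refine Finset.sum_congr rfl fun i _ => ?_
    have hpow : (b:ℝ)^((i:ℕ)+1) * (b:ℝ)^(n - ((i:ℕ)+1)) = (b:ℝ)^n := by
      rw [← pow_add]
      congr 1
      omega
    have hpne : (b:ℝ)^((i:ℕ)+1) ≠ 0 := by positivity
    rw [div_mul_eq_mul_div, ← hpow, mul_comm ((b:ℝ)^((i:ℕ)+1)) ((b:ℝ)^(n - ((i:ℕ)+1))), ← mul_assoc,
      mul_div_assoc, div_self hpne, mul_one]
  have h2 : (b:ℝ)^j = (b:ℝ)^n * (b:ℝ)^(j-n) := by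
    rw [← pow_add]
    congr 1
    omega
  rw [h2, ← mul_assoc, h1]
  push_cast
  rw [Finset.sum_mul]

/-! ### Main theorem -/

/-- Proposition 5.1 (iii): for `j₁ ≥ n` or `j₂ ≥ n`, the `b`-adic Haar coefficient of the
discrepancy function has absolute value `b^{−2j₁−2j₂−2}/(|e(ℓ₁)−1||e(ℓ₂)−1|)`. -/
theorem abs_haar_coeff_disc_large (b n : ℕ) (hb : 2 ≤ b) (hn : 1 ≤ n)
    (s : Fin n → ℕ → ℕ) (hs : IsDigitMaps b n s)
    (j₁ j₂ m₁ m₂ ℓ₁ ℓ₂ : ℕ) (hj : n ≤ j₁ ∨ n ≤ j₂)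
    (hm₁ : m₁ < b ^ j₁) (hm₂ : m₂ < b ^ j₂)
    (hℓ₁ : 1 ≤ ℓ₁) (hℓ₁' : ℓ₁ ≤ b - 1) (hℓ₂ : 1 ≤ ℓ₂) (hℓ₂' : ℓ₂ ≤ b - 1) :
    ‖∫ x₁ in Set.Ico (0:ℝ) 1, ∫ x₂ in Set.Ico (0:ℝ) 1,
        ((disc b n s x₁ x₂ : ℝ) : ℂ) * haar b j₁ m₁ ℓ₁ x₁ * haar b j₂ m₂ ℓ₂ x₂‖
      = (b:ℝ) ^ (-2*(j₁:ℤ) - 2*(j₂:ℤ) - 2) /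
          (‖Complex.exp (2 * Real.pi * Complex.I * ℓ₁ / b) - 1‖ *
           ‖Complex.exp (2 * Real.pi * Complex.I * ℓ₂ / b) - 1‖) := by
  have hb0 : (0:ℝ) < b := by exact_mod_cast (by omega : 0 < b)
  -- integrability of the basic building blocks
  have hind : ∀ a : ℝ, IntegrableOn (fun x : ℝ => (if a < x then (1:ℂ) else 0))
      (Set.Ico (0:ℝ) 1) := by
    intro a
    have hrep : (fun x : ℝ => (if a < x then (1:ℂ) else 0))
        = (Set.Ioi a).indicator (fun _ => (1:ℂ)) := by
      funext x
      simp [Set.indicator_apply, Set.mem_Ioi]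
    rw [hrep]
    exact (integrable_const _).indicator measurableSet_Ioi
  have iG : ∀ t : Fin n → Fin b,
      IntegrableOn (fun x₂ => (if z2 b n s t < x₂ then (1:ℂ) else 0) * haar b j₂ m₂ ℓ₂ x₂)
        (Set.Ico (0:ℝ) 1) := fun t => integrableOn_mul_haar ℓ₂ hb hm₂ (hind _)
  have iF : ∀ t : Fin n → Fin b,
      IntegrableOn (fun x₁ => (if z1 b n t < x₁ then (1:ℂ) else 0) * haar b j₁ m₁ ℓ₁ x₁)
        (Set.Ico (0:ℝ) 1) := fun t => integrableOn_mul_haar ℓ₁ hb hm₁ (hind _)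
  have iC2 : IntegrableOn (fun x₂ : ℝ => (x₂:ℂ) * haar b j₂ m₂ ℓ₂ x₂) (Set.Ico (0:ℝ) 1) :=
    integrableOn_mul_haar ℓ₂ hb hm₂ integrableOn_ofReal_Ico
  have iC1 : IntegrableOn (fun x₁ : ℝ => (x₁:ℂ) * haar b j₁ m₁ ℓ₁ x₁) (Set.Ico (0:ℝ) 1) :=
    integrableOn_mul_haar ℓ₁ hb hm₁ integrableOn_ofReal_Ico
  -- the inner integral
  have key1 : ∀ x₁ : ℝ,
      (∫ x₂ in Set.Ico (0:ℝ) 1,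
        ((disc b n s x₁ x₂ : ℝ) : ℂ) * haar b j₁ m₁ ℓ₁ x₁ * haar b j₂ m₂ ℓ₂ x₂)
      = haar b j₁ m₁ ℓ₁ x₁ *
          ((b:ℂ) ^ (-(n:ℤ)) *
              (∑ t : Fin n → Fin b, (if z1 b n t < x₁ then (1:ℂ) else 0) *
                (∫ x₂ in Set.Ico (0:ℝ) 1,
                  (if z2 b n s t < x₂ then (1:ℂ) else 0) * haar b j₂ m₂ ℓ₂ x₂))
            - (x₁:ℂ) * (∫ x₂ in Set.Ico (0:ℝ) 1, (x₂:ℂ) * haar b j₂ m₂ ℓ₂ x₂)) := by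
    intro x₁
    have hpt : ∀ x₂ : ℝ,
        ((disc b n s x₁ x₂ : ℝ) : ℂ) * haar b j₁ m₁ ℓ₁ x₁ * haar b j₂ m₂ ℓ₂ x₂
        = haar b j₁ m₁ ℓ₁ x₁ *
            ((b:ℂ) ^ (-(n:ℤ)) *
                (∑ t : Fin n → Fin b, (if z1 b n t < x₁ then (1:ℂ) else 0) *
                  ((if z2 b n s t < x₂ then (1:ℂ) else 0) * haar b j₂ m₂ ℓ₂ x₂))
              - (x₁:ℂ) * ((x₂:ℂ) * haar b j₂ m₂ ℓ₂ x₂)) := by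
      intro x₂
      rw [disc]
      push_cast [apply_ite Complex.ofReal]
      have hS : (∑ t : Fin n → Fin b, (if z1 b n t < x₁ then (1:ℂ) else 0) *
            (if z2 b n s t < x₂ then (1:ℂ) else 0)) * haar b j₂ m₂ ℓ₂ x₂
          = ∑ t : Fin n → Fin b, (if z1 b n t < x₁ then (1:ℂ) else 0) *
              ((if z2 b n s t < x₂ then (1:ℂ) else 0) * haar b j₂ m₂ ℓ₂ x₂) := by
        rw [Finset.sum_mul]
        exact Finset.sum_congr rfl fun t _ => mul_assoc _ _ _
      linear_combination (b:ℂ) ^ (-(n:ℤ)) * haar b j₁ m₁ ℓ₁ x₁ * hS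
    simp only [hpt]
    rw [MeasureTheory.integral_const_mul]
    congr 1
    rw [MeasureTheory.integral_sub
      ((integrable_finset_sum _ fun t _ => (iG t).const_mul _).const_mul _)
      (iC2.const_mul _)]
    congr 1
    · rw [MeasureTheory.integral_const_mul,
        integral_finset_sum _ fun t _ => (iG t).const_mul _]
      congr 1
      exact Finset.sum_congr rfl fun t _ => MeasureTheory.integral_const_mul _ _
    · exact MeasureTheory.integral_const_mul _ _
  -- the outer integral
  have key2 :
      (∫ x₁ in Set.Ico (0:ℝ) 1, ∫ x₂ in Set.Ico (0:ℝ) 1,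
        ((disc b n s x₁ x₂ : ℝ) : ℂ) * haar b j₁ m₁ ℓ₁ x₁ * haar b j₂ m₂ ℓ₂ x₂)
      = (b:ℂ) ^ (-(n:ℤ)) *
          (∑ t : Fin n → Fin b,
            (∫ x₂ in Set.Ico (0:ℝ) 1,
              (if z2 b n s t < x₂ then (1:ℂ) else 0) * haar b j₂ m₂ ℓ₂ x₂) *
            (∫ x₁ in Set.Ico (0:ℝ) 1,
              (if z1 b n t < x₁ then (1:ℂ) else 0) * haar b j₁ m₁ ℓ₁ x₁))
        - (∫ x₂ in Set.Ico (0:ℝ) 1, (x₂:ℂ) * haar b j₂ m₂ ℓ₂ x₂) *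
          (∫ x₁ in Set.Ico (0:ℝ) 1, (x₁:ℂ) * haar b j₁ m₁ ℓ₁ x₁) := by
    simp only [key1]
    have hpt2 : ∀ x₁ : ℝ,
        haar b j₁ m₁ ℓ₁ x₁ *
            ((b:ℂ) ^ (-(n:ℤ)) *
                (∑ t : Fin n → Fin b, (if z1 b n t < x₁ then (1:ℂ) else 0) *
                  (∫ x₂ in Set.Ico (0:ℝ) 1,
                    (if z2 b n s t < x₂ then (1:ℂ) else 0) * haar b j₂ m₂ ℓ₂ x₂))
              - (x₁:ℂ) * (∫ x₂ in Set.Ico (0:ℝ) 1, (x₂:ℂ) * haar b j₂ m₂ ℓ₂ x₂))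
        = (b:ℂ) ^ (-(n:ℤ)) *
            (∑ t : Fin n → Fin b,
              (∫ x₂ in Set.Ico (0:ℝ) 1,
                (if z2 b n s t < x₂ then (1:ℂ) else 0) * haar b j₂ m₂ ℓ₂ x₂) *
              ((if z1 b n t < x₁ then (1:ℂ) else 0) * haar b j₁ m₁ ℓ₁ x₁))
          - (∫ x₂ in Set.Ico (0:ℝ) 1, (x₂:ℂ) * haar b j₂ m₂ ℓ₂ x₂) *
            ((x₁:ℂ) * haar b j₁ m₁ ℓ₁ x₁) := by
      intro x₁
      have hS : (∑ t : Fin n → Fin b, (if z1 b n t < x₁ then (1:ℂ) else 0) *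
            (∫ x₂ in Set.Ico (0:ℝ) 1,
              (if z2 b n s t < x₂ then (1:ℂ) else 0) * haar b j₂ m₂ ℓ₂ x₂)) *
            haar b j₁ m₁ ℓ₁ x₁
          = ∑ t : Fin n → Fin b,
              (∫ x₂ in Set.Ico (0:ℝ) 1,
                (if z2 b n s t < x₂ then (1:ℂ) else 0) * haar b j₂ m₂ ℓ₂ x₂) *
              ((if z1 b n t < x₁ then (1:ℂ) else 0) * haar b j₁ m₁ ℓ₁ x₁) := by
        rw [Finset.sum_mul]
        exact Finset.sum_congr rfl fun t _ => by ring
      linear_combination (b:ℂ) ^ (-(n:ℤ)) * hS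
    simp only [hpt2]
    rw [MeasureTheory.integral_sub
      ((integrable_finset_sum _ fun t _ => (iF t).const_mul _).const_mul _)
      (iC1.const_mul _)]
    congr 1
    · rw [MeasureTheory.integral_const_mul,
        integral_finset_sum _ fun t _ => (iF t).const_mul _]
      congr 1
      exact Finset.sum_congr rfl fun t _ => MeasureTheory.integral_const_mul _ _
    · exact MeasureTheory.integral_const_mul _ _
  rw [key2]
  -- one of the two families of indicator integrals vanishes
  have hzero : (∑ t : Fin n → Fin b,
      (∫ x₂ in Set.Ico (0:ℝ) 1,
        (if z2 b n s t < x₂ then (1:ℂ) else 0) * haar b j₂ m₂ ℓ₂ x₂) *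
      (∫ x₁ in Set.Ico (0:ℝ) 1,
        (if z1 b n t < x₁ then (1:ℂ) else 0) * haar b j₁ m₁ ℓ₁ x₁)) = 0 := by
    rcases hj with hj | hj
    · refine Finset.sum_eq_zero fun t _ => ?_
      obtain ⟨c, hc⟩ := z1_scaled b n hb t j₁ hj
      rw [integral_indicator_mul_haar b j₁ m₁ ℓ₁ hb hm₁ hℓ₁ hℓ₁' _ c hc, mul_zero]
    · refine Finset.sum_eq_zero fun t _ => ?_
      obtain ⟨c, hc⟩ := z2_scaled b n hb s t j₂ hj
      rw [integral_indicator_mul_haar b j₂ m₂ ℓ₂ hb hm₂ hℓ₂ hℓ₂' _ c hc, zero_mul]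
  rw [hzero, mul_zero, zero_sub]
  rw [integral_x_mul_haar b j₁ m₁ ℓ₁ hb hm₁ hℓ₁ hℓ₁',
    integral_x_mul_haar b j₂ m₂ ℓ₂ hb hm₂ hℓ₂ hℓ₂']
  have e1 : bexp b ℓ₁ 1 = Complex.exp (2 * Real.pi * Complex.I * ℓ₁ / b) := by
    rw [bexp]; norm_num
  have e2 : bexp b ℓ₂ 1 = Complex.exp (2 * Real.pi * Complex.I * ℓ₂ / b) := by
    rw [bexp]; norm_num
  have d1ne : ‖Complex.exp (2 * Real.pi * Complex.I * ℓ₁ / b) - 1‖ ≠ 0 := by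
    rw [← e1]
    exact norm_ne_zero_iff.mpr (sub_ne_zero.mpr (bexp_ne_one b ℓ₁ hb hℓ₁ hℓ₁'))
  have d2ne : ‖Complex.exp (2 * Real.pi * Complex.I * ℓ₂ / b) - 1‖ ≠ 0 := by
    rw [← e2]
    exact norm_ne_zero_iff.mpr (sub_ne_zero.mpr (bexp_ne_one b ℓ₂ hb hℓ₂ hℓ₂'))
  rw [norm_neg, e1, e2, norm_mul, norm_mul, norm_mul, norm_inv, norm_inv, norm_inv,
    norm_inv, norm_pow, norm_pow, Complex.norm_natCast]
  have hzp : (b:ℝ) ^ (-2*(j₁:ℤ) - 2*(j₂:ℤ) - 2)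
      = (((b:ℝ) ^ (2*j₁+1))⁻¹) * (((b:ℝ) ^ (2*j₂+1))⁻¹) := by
    rw [← zpow_natCast (b:ℝ) (2*j₁+1), ← zpow_natCast (b:ℝ) (2*j₂+1), ← zpow_neg, ← zpow_neg,
      ← zpow_add₀ (ne_of_gt hb0)]
    congr 1
    push_cast
    ring
  rw [hzp]
  field_simp
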